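/- In a complete directed weighted graph with self-loops satisfying the Monge property (if w(u,v) ≥ max{w(u,v'), w(u',v)} then w(u,v)+w(u',v') ≥ w(u,v')+w(u',v)), any cycle cover constructed by greedily processing edges in a dominance-respecting order (rejecting an edge iff it is dominated by an already chosen edge) is a maximum-weight cycle cover. -/

import Mathlib

open scoped Classical

/-- Edge `e` dominates `e'` if they share a tail or a head and `e` has at
least as large weight. -/
def Dominates {V : Type*} (w : V → V → ℝ) (e e' : V × V) : Prop :=
  (e'.1 = e.1 ∨ e'.2 = e.2) ∧ w e'.1 e'.2 ≤ w e.1 e.2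

/-- Strict domination. -/
def StrictlyDominates {V : Type*} (w : V → V → ℝ) (e e' : V × V) : Prop :=
  (e'.1 = e.1 ∨ e'.2 = e.2) ∧ w e'.1 e'.2 < w e.1 e.2

/-- The Monge property: if `(u,v)` dominates `(u,v')` and `(u',v)`, then
`w(u,v) + w(u',v') ≥ w(u,v') + w(u',v)`. -/
def MongeProp {V : Type*} (w : V → V → ℝ) : Prop :=
  ∀ u v u' v', w u v' ≤ w u v → w u' v ≤ w u v →
    w u v' + w u' v ≤ w u v + w u' v'

/-- A cycle cover: every node has in-degree 1 and out-degree 1. -/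
def IsCycleCover {V : Type*} [Fintype V] [DecidableEq V] (C : Finset (V × V)) : Prop :=
  ∀ v : V, (C.filter (fun e => e.1 = v)).card = 1 ∧
    (C.filter (fun e => e.2 = v)).card = 1

/-- Total weight of an edge set. -/
noncomputable def edgeWeight {V : Type*} (w : V → V → ℝ) (C : Finset (V × V)) : ℝ :=
  ∑ e ∈ C, w e.1 e.2

/-- The greedy algorithm CYC: process edges in order, rejecting an edge iff it
is dominated by an already chosen edge. -/
noncomputable def greedyCC {V : Type*} [DecidableEq V] (w : V → V → ℝ) :
    List (V × V) → Finset (V × V) → Finset (V × V)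
  | [], acc => acc
  | e :: rest, acc =>
      if ∃ e' ∈ acc, Dominates w e' e then greedyCC w rest acc
      else greedyCC w rest (insert e acc)

/-- A dominance-respecting order on the list of all edges. -/
def DomRespecting {V : Type*} [Fintype V] [DecidableEq V] (w : V → V → ℝ)
    (L : List (V × V)) : Prop :=
  L.Nodup ∧ (∀ e : V × V, e ∈ L) ∧
  ∀ e e' : V × V, StrictlyDominates w e e' → L.idxOf e ≤ L.idxOf e'

section Aux
variable {V : Type*} [Fintype V] [DecidableEq V]

section IndexOfBEq
variable {α : Type*} [BEq α] [LawfulBEq α]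

lemma myIdx_cons_self (a : α) (l : List α) : List.idxOf a (a :: l) = 0 := by
  simp [List.idxOf_cons]

lemma myIdx_cons_ne {a b : α} (l : List α) (h : b ≠ a) :
    List.idxOf a (b :: l) = List.idxOf a l + 1 := by
  simp [List.idxOf_cons, beq_false_of_ne h]

lemma myIdx_append_of_not_mem {a : α} {l₁ : List α} (l₂ : List α) (h : a ∉ l₁) :
    List.idxOf a (l₁ ++ l₂) = l₁.length + List.idxOf a l₂ := by
  induction l₁ with
  | nil => simp
  | cons b t ih =>
    have hb : b ≠ a := fun hba => h (hba ▸ List.mem_cons_self)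
    rw [List.cons_append, myIdx_cons_ne _ hb,
      ih (fun ht => h (List.mem_cons_of_mem b ht)), List.length_cons]
    omega

lemma myIdx_append_of_mem {a : α} {l₁ : List α} (l₂ : List α) (h : a ∈ l₁) :
    List.idxOf a (l₁ ++ l₂) = List.idxOf a l₁ := by
  induction l₁ with
  | nil => simp at h
  | cons b t ih =>
    by_cases hb : b = a
    · subst hb; rw [List.cons_append, myIdx_cons_self, myIdx_cons_self]
    · rcases List.mem_cons.mp h with h' | h'
      · exact absurd h'.symm hb
      · rw [List.cons_append, myIdx_cons_ne _ hb, myIdx_cons_ne _ hb, ih h']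

lemma myIdx_lt_length {a : α} {l : List α} (h : a ∈ l) :
    List.idxOf a l < l.length := by
  induction l with
  | nil => simp at h
  | cons b t ih =>
    by_cases hb : b = a
    · subst hb; rw [myIdx_cons_self]; simp
    · rcases List.mem_cons.mp h with h' | h'
      · exact absurd h'.symm hb
      · rw [myIdx_cons_ne _ hb, List.length_cons]
        exact Nat.succ_lt_succ (ih h')

end IndexOfBEq

/-- The graph of a permutation, as a set of edges. -/
noncomputable def permGraph (σ : Equiv.Perm V) : Finset (V × V) :=
  Finset.univ.image fun x => (x, σ x)

lemma mem_permGraph (σ : Equiv.Perm V) (p : V × V) :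
    p ∈ permGraph σ ↔ σ p.1 = p.2 := by
  simp only [permGraph, Finset.mem_image, Finset.mem_univ, true_and]
  constructor
  · rintro ⟨x, hx⟩; rw [← hx]
  · intro h; exact ⟨p.1, by rw [h]⟩

lemma isCycleCover_permGraph (σ : Equiv.Perm V) : IsCycleCover (permGraph σ) := by
  intro v
  constructor
  · have : (permGraph σ).filter (fun e => e.1 = v) = {(v, σ v)} := by
      ext p
      simp only [Finset.mem_filter, mem_permGraph, Finset.mem_singleton]
      constructor
      · rintro ⟨h1, h2⟩; subst h2; exact Prod.ext rfl h1.symm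
      · rintro rfl; exact ⟨rfl, rfl⟩
    rw [this]; rfl
  · have : (permGraph σ).filter (fun e => e.2 = v) = {(σ⁻¹ v, v)} := by
      ext p
      simp only [Finset.mem_filter, mem_permGraph, Finset.mem_singleton]
      constructor
      · rintro ⟨h1, h2⟩
        refine Prod.ext ?_ h2
        rw [← h2, ← h1]; simp
      · rintro rfl; exact ⟨by simp, rfl⟩
    rw [this]; rfl

lemma edgeWeight_permGraph (w : V → V → ℝ) (σ : Equiv.Perm V) :
    edgeWeight w (permGraph σ) = ∑ x, w x (σ x) := by
  unfold edgeWeight permGraph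
  rw [Finset.sum_image]
  intro x _ y _ h
  exact (Prod.mk.injEq _ _ _ _ ▸ h).1

lemma IsCycleCover.exists_perm {C : Finset (V × V)} (hC : IsCycleCover C) :
    ∃ σ : Equiv.Perm V, C = permGraph σ := by
  have hout : ∀ v : V, ∃ a : V × V, C.filter (fun e => e.1 = v) = {a} := by
    intro v; exact Finset.card_eq_one.mp (hC v).1
  choose a ha using hout
  have haC : ∀ v, a v ∈ C ∧ (a v).1 = v := by
    intro v
    have : a v ∈ C.filter (fun e => e.1 = v) := by
      rw [ha v]; exact Finset.mem_singleton_self _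
    exact Finset.mem_filter.mp this
  set f : V → V := fun v => (a v).2 with hf
  have hfC : ∀ v, (v, f v) ∈ C := by
    intro v
    have h2 := (haC v).2
    have heq : a v = (v, f v) := Prod.ext h2 rfl
    rw [← heq]; exact (haC v).1
  have hinj : Function.Injective f := by
    intro x y hxy
    have hx : (x, f x) ∈ C.filter (fun e => e.2 = f x) :=
      Finset.mem_filter.mpr ⟨hfC x, rfl⟩
    have hy : (y, f y) ∈ C.filter (fun e => e.2 = f x) :=
      Finset.mem_filter.mpr ⟨hfC y, hxy.symm⟩
    obtain ⟨b, hb⟩ := Finset.card_eq_one.mp (hC (f x)).2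
    rw [hb, Finset.mem_singleton] at hx hy
    have := hx.trans hy.symm
    exact (Prod.mk.injEq _ _ _ _ ▸ this).1
  have hbij : Function.Bijective f := (Finite.injective_iff_bijective).mp hinj
  refine ⟨Equiv.ofBijective f hbij, ?_⟩
  ext p
  rw [mem_permGraph]
  constructor
  · intro hp
    have hmem : p ∈ C.filter (fun e => e.1 = p.1) := Finset.mem_filter.mpr ⟨hp, rfl⟩
    rw [ha p.1, Finset.mem_singleton] at hmem
    have h2 : (a p.1).2 = p.2 := by rw [← hmem]
    exact h2
  · intro hp
    have hmem : (p.1, f p.1) ∈ C := hfC p.1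
    have he : p = (p.1, f p.1) := Prod.ext rfl hp.symm
    rw [he]; exact hmem

lemma IsCycleCover.card_eq {C : Finset (V × V)} (hC : IsCycleCover C) :
    C.card = Fintype.card V := by
  obtain ⟨σ, rfl⟩ := hC.exists_perm
  unfold permGraph
  rw [Finset.card_image_of_injective _ (fun x y h => (Prod.mk.injEq _ _ _ _ ▸ h).1)]
  exact Finset.card_univ

lemma exchange {w : V → V → ℝ}
    (hmonge : MongeProp w) (σ : Equiv.Perm V) (u v : V)
    (h1 : w u (σ u) ≤ w u v) (h2 : w (σ⁻¹ v) v ≤ w u v) :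
    ∃ τ : Equiv.Perm V, τ u = v ∧ (∀ x, x ≠ u → σ x ≠ v → τ x = σ x) ∧
      ∑ x, w x (σ x) ≤ ∑ x, w x (τ x) := by
  by_cases hv : σ u = v
  · exact ⟨σ, hv, fun x _ _ => rfl, le_refl _⟩
  · set u' := σ⁻¹ v with hu'
    have hσu' : σ u' = v := σ.apply_symm_apply v
    have huu' : u ≠ u' := fun h => hv (by rw [h, hσu'])
    set τ : Equiv.Perm V := σ * Equiv.swap u u' with hτ
    have hτu : τ u = v := by
      rw [hτ, Equiv.Perm.mul_apply, Equiv.swap_apply_left, hσu']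
    have hτu' : τ u' = σ u := by
      rw [hτ, Equiv.Perm.mul_apply, Equiv.swap_apply_right]
    have hτx : ∀ x, x ≠ u → x ≠ u' → τ x = σ x := by
      intro x hxu hxu'
      rw [hτ, Equiv.Perm.mul_apply, Equiv.swap_apply_of_ne_of_ne hxu hxu']
    refine ⟨τ, hτu, ?_, ?_⟩
    · intro x hxu hxv
      exact hτx x hxu (fun h => hxv (by rw [h, hσu']))
    · have key : w u (σ u) + w u' v ≤ w u v + w u' (σ u) :=
        hmonge u v u' (σ u) h1 h2
      have hs : ({u, u'} : Finset V) ⊆ Finset.univ := Finset.subset_univ _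
      have e1 : ∑ x, w x (σ x)
          = (∑ x ∈ Finset.univ \ {u, u'}, w x (σ x)) + (w u (σ u) + w u' v) := by
        rw [← Finset.sum_sdiff hs, Finset.sum_pair huu', hσu']
      have e2 : ∑ x, w x (τ x)
          = (∑ x ∈ Finset.univ \ {u, u'}, w x (σ x)) + (w u v + w u' (σ u)) := by
        rw [← Finset.sum_sdiff hs, Finset.sum_pair huu', hτu, hτu']
        congr 1
        apply Finset.sum_congr rfl
        intro x hx
        simp only [Finset.mem_sdiff, Finset.mem_insert, Finset.mem_singleton] at hx
        push_neg at hx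
        rw [hτx x hx.2.1 hx.2.2]
      rw [e1, e2]
      linarith

lemma greedy_inv {w : V → V → ℝ}
    (hmonge : MongeProp w) (L : List (V × V)) (hL : DomRespecting w L) :
    ∀ (L' P : List (V × V)) (acc : Finset (V × V)), L = P ++ L' →
      (∀ f ∈ acc, f ∈ P) →
      (∀ e ∈ P, ∃ f ∈ acc, Dominates w f e) →
      (∀ C', IsCycleCover C' → ∃ C2, IsCycleCover C2 ∧ acc ⊆ C2 ∧
        edgeWeight w C' ≤ edgeWeight w C2) →
      (∀ f ∈ greedyCC w L' acc, f ∈ L) ∧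
      (∀ e ∈ L, ∃ f ∈ greedyCC w L' acc, Dominates w f e) ∧
      (∀ C', IsCycleCover C' → ∃ C2, IsCycleCover C2 ∧ greedyCC w L' acc ⊆ C2 ∧
        edgeWeight w C' ≤ edgeWeight w C2) := by
  obtain ⟨hnd, hcomp, hord⟩ := hL
  intro L'
  induction L' with
  | nil =>
    intro P acc hPL h1 h2 h3
    rw [greedyCC]
    have hPL' : P = L := by rw [hPL, List.append_nil]
    exact ⟨fun f hf => hPL' ▸ h1 f hf,
      fun e he => h2 e (by rw [hPL']; exact he), h3⟩
  | cons e rest ih =>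
    intro P acc hPL h1 h2 h3
    have hPL2 : L = (P ++ [e]) ++ rest := by rw [hPL]; simp
    have hdisj : List.Disjoint P (e :: rest) := by
      rw [hPL] at hnd; exact List.disjoint_iff_ne.mpr (List.nodup_append.mp hnd).2.2
    have hnotP : e ∉ P := fun h => hdisj h (List.mem_cons_self)
    have hidx : L.idxOf e = P.length := by
      rw [hPL, myIdx_append_of_not_mem _ hnotP, myIdx_cons_self, Nat.add_zero]
    have hPidx : ∀ f ∈ P, L.idxOf f < P.length := by
      intro f hf
      rw [hPL, myIdx_append_of_mem _ hf]
      exact myIdx_lt_length hf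
    rw [greedyCC]
    by_cases hd : ∃ f ∈ acc, Dominates w f e
    · rw [if_pos hd]
      refine ih (P ++ [e]) acc hPL2 (fun f hf => by simp [h1 f hf]) ?_ h3
      intro e'' he''
      rcases List.mem_append.mp he'' with h | h
      · exact h2 e'' h
      · rw [List.mem_singleton] at h; subst h; exact hd
    · rw [if_neg hd]
      have ha : ∀ f ∈ acc, f.1 ≠ e.1 ∧ f.2 ≠ e.2 := by
        intro f hf
        by_contra hcon
        push_neg at hcon
        have hshare : f.1 = e.1 ∨ f.2 = e.2 := by
          by_cases h : f.1 = e.1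
          · exact Or.inl h
          · exact Or.inr (hcon h)
        have hwlt : w f.1 f.2 < w e.1 e.2 := by
          by_contra hle
          push_neg at hle
          exact hd ⟨f, hf, hshare.imp Eq.symm Eq.symm, hle⟩
        have hle2 : L.idxOf e ≤ L.idxOf f := hord e f ⟨hshare, hwlt⟩
        have hlt2 := hPidx f (h1 f hf)
        rw [hidx] at hle2
        omega
      have hb : ∀ e' : V × V, (e'.1 = e.1 ∨ e'.2 = e.2) →
          w e.1 e.2 < w e'.1 e'.2 → ∃ f ∈ acc, Dominates w f e' := by
        intro e' hsh hlt
        have hsd : StrictlyDominates w e' e := ⟨hsh.imp Eq.symm Eq.symm, hlt⟩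
        have hle : L.idxOf e' ≤ L.idxOf e := hord e' e hsd
        have hne : e' ≠ e := fun h => by rw [h] at hlt; exact lt_irrefl _ hlt
        have heP : e' ∈ P := by
          by_contra hnP
          have he'L : e' ∈ L := hcomp e'
          rw [hPL] at he'L
          rcases List.mem_append.mp he'L with h | h
          · exact hnP h
          · have hcalc : L.idxOf e'
                = P.length + (List.idxOf e' rest + 1) := by
              rw [hPL, myIdx_append_of_not_mem _ hnP, myIdx_cons_ne _ (Ne.symm hne)]
            rw [hidx] at hle
            omega
        exact h2 e' heP
      refine ih (P ++ [e]) (insert e acc) hPL2 ?_ ?_ ?_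
      · intro f hf
        rcases Finset.mem_insert.mp hf with rfl | hf'
        · simp
        · simp [h1 f hf']
      · intro e'' he''
        rcases List.mem_append.mp he'' with h | h
        · obtain ⟨f, hf, hdom⟩ := h2 e'' h
          exact ⟨f, Finset.mem_insert_of_mem hf, hdom⟩
        · rw [List.mem_singleton] at h; subst h
          exact ⟨_, Finset.mem_insert_self _ _, Or.inl rfl, le_refl _⟩
      · intro C' hC'
        obtain ⟨C2, hcc2, hsub2, hw2⟩ := h3 C' hC'
        obtain ⟨σ, rfl⟩ := hcc2.exists_perm
        have hσa : ∀ f ∈ acc, σ f.1 = f.2 :=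
          fun f hf => (mem_permGraph σ f).mp (hsub2 hf)
        have hm1 : w e.1 (σ e.1) ≤ w e.1 e.2 := by
          by_contra hlt; push_neg at hlt
          obtain ⟨f, hf, hdom⟩ := hb (e.1, σ e.1) (Or.inl rfl) hlt
          obtain ⟨hsh, _⟩ := hdom
          rcases hsh with h | h
          · exact (ha f hf).1 h.symm
          · have hfa := hσa f hf
            have : f.1 = e.1 := σ.injective (by rw [hfa, ← h])
            exact (ha f hf).1 this
        have hm2 : w (σ⁻¹ e.2) e.2 ≤ w e.1 e.2 := by
          by_contra hlt; push_neg at hlt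
          obtain ⟨f, hf, hdom⟩ := hb (σ⁻¹ e.2, e.2) (Or.inr rfl) hlt
          obtain ⟨hsh, _⟩ := hdom
          rcases hsh with h | h
          · have hfa := hσa f hf
            have : f.2 = e.2 := by rw [← hfa, ← h]; simp
            exact (ha f hf).2 this
          · exact (ha f hf).2 h.symm
        obtain ⟨τ, hτ1, hτ2, hτ3⟩ := exchange hmonge σ e.1 e.2 hm1 hm2
        refine ⟨permGraph τ, isCycleCover_permGraph τ, ?_, ?_⟩
        · intro f hf
          rcases Finset.mem_insert.mp hf with rfl | hf'
          · rw [mem_permGraph]; exact hτ1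
          · rw [mem_permGraph]
            have hfa := hσa f hf'
            rw [hτ2 f.1 (ha f hf').1 (by rw [hfa]; exact (ha f hf').2)]
            exact hfa
        · calc edgeWeight w C' ≤ edgeWeight w (permGraph σ) := hw2
            _ = ∑ x, w x (σ x) := edgeWeight_permGraph w σ
            _ ≤ ∑ x, w x (τ x) := hτ3
            _ = edgeWeight w (permGraph τ) := (edgeWeight_permGraph w τ).symm

end Aux

/-- Greedy processing of edges in a dominance-respecting order yields a
maximum-weight cycle cover. -/
theorem stmt_8 {V : Type*} [Fintype V] [DecidableEq V] (w : V → V → ℝ)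
    (hw : ∀ u v : V, 0 ≤ w u v) (hmonge : MongeProp w)
    (L : List (V × V)) (hL : DomRespecting w L) :
    IsCycleCover (greedyCC w L ∅) ∧
    ∀ C' : Finset (V × V), IsCycleCover C' →
      edgeWeight w C' ≤ edgeWeight w (greedyCC w L ∅) := by
  have hcomp := hL.2.1
  obtain ⟨g1, g2, g3⟩ := greedy_inv hmonge L hL L [] ∅ (by simp) (by simp)
    (by simp) (fun C' h => ⟨C', h, Finset.empty_subset _, le_refl _⟩)
  set A := greedyCC w L ∅ with hA
  obtain ⟨C0, hcc0, hsub0, _⟩ := g3 (permGraph 1) (isCycleCover_permGraph 1)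
  have hout_le : ∀ v : V, (A.filter (fun p => p.1 = v)).card ≤ 1 := by
    intro v
    calc (A.filter (fun p => p.1 = v)).card
        ≤ (C0.filter (fun p => p.1 = v)).card :=
          Finset.card_le_card (Finset.filter_subset_filter _ hsub0)
      _ = 1 := (hcc0 v).1
  have hin_le : ∀ v : V, (A.filter (fun p => p.2 = v)).card ≤ 1 := by
    intro v
    calc (A.filter (fun p => p.2 = v)).card
        ≤ (C0.filter (fun p => p.2 = v)).card :=
          Finset.card_le_card (Finset.filter_subset_filter _ hsub0)
      _ = 1 := (hcc0 v).2
  have hcard_out : A.card = ∑ v, (A.filter (fun p => p.1 = v)).card :=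
    Finset.card_eq_sum_card_fiberwise (fun x _ => Finset.mem_univ x.1)
  have hcard_in : A.card = ∑ v, (A.filter (fun p => p.2 = v)).card :=
    Finset.card_eq_sum_card_fiberwise (fun x _ => Finset.mem_univ x.2)
  have hsum_lt : ∀ (d : V → ℕ) (z : V), (∀ v, d v ≤ 1) → d z = 0 →
      ∑ v, d v < Fintype.card V := by
    intro d z hle hz
    have h1 : ∑ v, d v = ∑ v ∈ Finset.univ.erase z, d v + d z :=
      (Finset.sum_erase_add _ _ (Finset.mem_univ z)).symm
    rw [h1, hz, Nat.add_zero]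
    calc ∑ v ∈ Finset.univ.erase z, d v
        ≤ ∑ _v ∈ Finset.univ.erase z, 1 := Finset.sum_le_sum (fun v _ => hle v)
      _ = (Finset.univ.erase z).card := by simp
      _ = Fintype.card V - 1 := by
          rw [Finset.card_erase_of_mem (Finset.mem_univ z), Finset.card_univ]
      _ < Fintype.card V := by
          have : 0 < Fintype.card V := Fintype.card_pos_iff.mpr ⟨z⟩
          omega
  have hsum_all : ∀ (d : V → ℕ), (∀ v, d v ≤ 1) → (∀ v, d v ≠ 0) →
      ∑ v, d v = Fintype.card V := by
    intro d hle hne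
    have : ∀ v ∈ Finset.univ, d v = 1 :=
      fun v _ => le_antisymm (hle v) (Nat.one_le_iff_ne_zero.mpr (hne v))
    rw [Finset.sum_congr rfl this]; simp
  have hkey : ∀ u z : V, ¬((A.filter (fun p => p.1 = u)).card = 0 ∧
      (A.filter (fun p => p.2 = z)).card = 0) := by
    rintro u z ⟨hu, hz⟩
    obtain ⟨f, hf, hsh, _⟩ := g2 (u, z) (hcomp (u, z))
    rcases hsh with h | h
    · have hmem : f ∈ A.filter (fun p => p.1 = u) :=
        Finset.mem_filter.mpr ⟨hf, h.symm⟩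
      rw [Finset.card_eq_zero.mp hu] at hmem
      exact absurd hmem (Finset.notMem_empty f)
    · have hmem : f ∈ A.filter (fun p => p.2 = z) :=
        Finset.mem_filter.mpr ⟨hf, h.symm⟩
      rw [Finset.card_eq_zero.mp hz] at hmem
      exact absurd hmem (Finset.notMem_empty f)
  have hout_ne : ∀ u, (A.filter (fun p => p.1 = u)).card ≠ 0 := by
    intro u hu
    have hlt : ∑ v, (A.filter (fun p => p.2 = v)).card < Fintype.card V := by
      have h1 := hsum_lt (fun v => (A.filter (fun p => p.1 = v)).card) u hout_le hu
      rw [← hcard_out] at h1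
      rw [← hcard_in]
      exact h1
    have hz : ∃ z, (A.filter (fun p => p.2 = z)).card = 0 := by
      by_contra hc
      push_neg at hc
      rw [hsum_all _ hin_le hc] at hlt
      exact lt_irrefl _ hlt
    obtain ⟨z, hz⟩ := hz
    exact hkey u z ⟨hu, hz⟩
  have hin_ne : ∀ z, (A.filter (fun p => p.2 = z)).card ≠ 0 := by
    intro z hz
    have hlt : ∑ v, (A.filter (fun p => p.1 = v)).card < Fintype.card V := by
      have h1 := hsum_lt (fun v => (A.filter (fun p => p.2 = v)).card) z hin_le hz
      rw [← hcard_in] at h1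
      rw [← hcard_out]
      exact h1
    have hu : ∃ u, (A.filter (fun p => p.1 = u)).card = 0 := by
      by_contra hc
      push_neg at hc
      rw [hsum_all _ hout_le hc] at hlt
      exact lt_irrefl _ hlt
    obtain ⟨u, hu⟩ := hu
    exact hkey u z ⟨hu, hz⟩
  have hccA : IsCycleCover A := by
    intro v
    exact ⟨le_antisymm (hout_le v) (Nat.one_le_iff_ne_zero.mpr (hout_ne v)),
      le_antisymm (hin_le v) (Nat.one_le_iff_ne_zero.mpr (hin_ne v))⟩
  refine ⟨hccA, ?_⟩
  intro C' hC'
  obtain ⟨C2, hcc2, hsub2, hw2⟩ := g3 C' hC'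
  have heq : A = C2 := Finset.eq_of_subset_of_card_le hsub2
    (by rw [hcc2.card_eq, hccA.card_eq])
  rw [heq]
  exact hw2
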